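/- Let σ ∈ S_n be a permutation satisfying Σ_{w ∈ R(σ)} d_B(w) ≤ |R(σ)| (equivalently, the number of braid edges of G(σ) is at most |R(σ)|/2). Then the number of braid classes satisfies |B(σ)| ≥ (1/2)·|R(σ)| − 1, and the number of commutation classes satisfies |C(σ)| ≤ (1/2)·|R(σ)| + 2. -/

import Mathlib

namespace RW

/-- The simple transposition `s i = (i, i+1)`, acting on `ℕ` (points are `1, …, n`;
the point `0` is unused, matching the paper's 1-indexed conventions). -/
def s (i : ℕ) : Equiv.Perm ℕ := Equiv.swap i (i + 1)

/-- The product `s i₁ * s i₂ * ⋯ * s iₗ` of the word `w = [i₁, …, iₗ]`. -/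
def π (w : List ℕ) : Equiv.Perm ℕ := (w.map s).prod

/-- The copy of the symmetric group `S_n` inside `Equiv.Perm ℕ`: permutations of
`{1, …, n}`, i.e. fixing `0` and every point `> n`. -/
def Sn (n : ℕ) : Set (Equiv.Perm ℕ) := {σ | ∀ m : ℕ, (m = 0 ∨ n < m) → σ m = m}

/-- The length `ℓ(σ)`: the number of inversions of `σ`. -/
noncomputable def len (σ : Equiv.Perm ℕ) : ℕ :=
  Nat.card {p : ℕ × ℕ // p.1 < p.2 ∧ σ p.2 < σ p.1}

/-- `w` is a reduced word for `σ`: its product is `σ` and its length is `ℓ(σ)`. -/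
def Reduced (σ : Equiv.Perm ℕ) (w : List ℕ) : Prop :=
  π w = σ ∧ w.length = len σ

/-- `R σ`: the set of reduced words of `σ`. -/
def R (σ : Equiv.Perm ℕ) : Set (List ℕ) := {w | Reduced σ w}

/-- The descent set `Des σ = {i ≥ 1 | σ(i) > σ(i+1)}`. -/
def Des (σ : Equiv.Perm ℕ) : Set ℕ := {i | 1 ≤ i ∧ σ (i + 1) < σ i}

/-- A single commutation move: swap two adjacent letters `a, b` with `|a - b| > 1`. -/
def CommMove (w w' : List ℕ) : Prop :=
  ∃ u v : List ℕ, ∃ a b : ℕ, 1 < ((a : ℤ) - (b : ℤ)).natAbs ∧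
    w = u ++ a :: b :: v ∧ w' = u ++ b :: a :: v

/-- A single braid move: replace consecutive letters `(a, a+1, a)` by `(a+1, a, a+1)`
or vice versa. -/
def BraidMove (w w' : List ℕ) : Prop :=
  ∃ u v : List ℕ, ∃ a : ℕ,
    (w = u ++ a :: (a+1) :: a :: v ∧ w' = u ++ (a+1) :: a :: (a+1) :: v) ∨
    (w = u ++ (a+1) :: a :: (a+1) :: v ∧ w' = u ++ a :: (a+1) :: a :: v)

/-- The braid degree of a word: the number of words obtainable from it by a single
braid move.  (For `w ∈ R σ` these are exactly the braid-edge neighbours of `w` in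
`G(σ)`, since a braid move sends reduced words of `σ` to reduced words of `σ`.) -/
noncomputable def dB (w : List ℕ) : ℕ := Nat.card {w' : List ℕ // BraidMove w w'}

/-- The commutation degree of a word: the number of words obtainable from it by a
single commutation move. -/
noncomputable def dC (w : List ℕ) : ℕ := Nat.card {w' : List ℕ // CommMove w w'}

/-- The number `|B(σ)|` of braid classes: classes of `R σ` under the equivalence
generated by single braid moves. -/
noncomputable def nB (σ : Equiv.Perm ℕ) : ℕ :=
  Nat.card (Quot (fun w w' : R σ => BraidMove w.1 w'.1))

/-- The number `|C(σ)|` of commutation classes. -/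
noncomputable def nC (σ : Equiv.Perm ℕ) : ℕ :=
  Nat.card (Quot (fun w w' : R σ => CommMove w.1 w'.1))

/-- The underlying function of `w₀^{(k,i)}`: reverse the interval `{i, …, i+k-1}`. -/
def w0fun (k i : ℕ) : ℕ → ℕ := fun m => if i ≤ m ∧ m < i + k then i + (i + k - 1) - m else m

theorem w0fun_involutive (k i : ℕ) : Function.Involutive (w0fun k i) := by
  intro m
  unfold w0fun
  split_ifs <;> omega

/-- `w₀^{(k,i)}`: the permutation fixing every point outside `{i, …, i+k-1}` and
reversing that interval. -/
def w0 (k i : ℕ) : Equiv.Perm ℕ := (w0fun_involutive k i).toPerm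

/-- Right weak order: `τ ≤ σ` iff `ℓ(τ) + ℓ(τ⁻¹σ) = ℓ(σ)`. -/
def wle (τ σ : Equiv.Perm ℕ) : Prop := len τ + len (τ⁻¹ * σ) = len σ

/-- The support of `σ`: the letters appearing in some reduced word of `σ`. -/
def supp (σ : Equiv.Perm ℕ) : Set ℕ := {a | ∃ w, Reduced σ w ∧ a ∈ w}




lemma pi_nil : π [] = 1 := rfl
lemma pi_cons (a : ℕ) (w : List ℕ) : π (a :: w) = s a * π w := by
  simp [π]
lemma pi_append (u v : List ℕ) : π (u ++ v) = π u * π v := by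
  simp [π]

lemma s_apply (b m : ℕ) : s b m = if m = b then b + 1 else if m = b + 1 then b else m := by
  simp [s, Equiv.swap_apply_def]

lemma s_mul_self (a : ℕ) : s a * s a = 1 := by
  simp [s]

lemma s_inv (a : ℕ) : (s a)⁻¹ = s a := by
  simp [s]

lemma braid_rel (a : ℕ) : s a * s (a+1) * s a = s (a+1) * s a * s (a+1) := by
  unfold s
  show Equiv.swap a (a+1) * Equiv.swap (a+1) (a+2) * Equiv.swap a (a+1)
      = Equiv.swap (a+1) (a+2) * Equiv.swap a (a+1) * Equiv.swap (a+1) (a+2)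
  have h2 : Equiv.swap (a+1) (a+2) * Equiv.swap a (a+1) * Equiv.swap (a+1) (a+2)
      = Equiv.swap (a+2) a :=
    Equiv.swap_mul_swap_mul_swap (x := a) (y := a+1) (z := a+2) (by omega) (by omega)
  have h1 : Equiv.swap (a+1) a * Equiv.swap (a+2) (a+1) * Equiv.swap (a+1) a
      = Equiv.swap a (a+2) :=
    Equiv.swap_mul_swap_mul_swap (x := a+2) (y := a+1) (z := a) (by omega) (by omega)
  calc Equiv.swap a (a+1) * Equiv.swap (a+1) (a+2) * Equiv.swap a (a+1)
      = Equiv.swap (a+1) a * Equiv.swap (a+2) (a+1) * Equiv.swap (a+1) a := by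
        rw [Equiv.swap_comm a (a+1), Equiv.swap_comm (a+1) (a+2)]
    _ = Equiv.swap a (a+2) := h1
    _ = Equiv.swap (a+2) a := Equiv.swap_comm _ _
    _ = Equiv.swap (a+1) (a+2) * Equiv.swap a (a+1) * Equiv.swap (a+1) (a+2) := h2.symm

set_option maxHeartbeats 1000000 in
lemma comm_rel {a b : ℕ} (h : 1 < ((a : ℤ) - (b : ℤ)).natAbs) : s a * s b = s b * s a := by
  have h' : a + 1 < b ∨ b + 1 < a := by omega
  ext m
  simp only [Equiv.Perm.mul_apply, s_apply]
  split_ifs <;> omega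

def Inv (σ : Equiv.Perm ℕ) : Set (ℕ × ℕ) := {p | p.1 < p.2 ∧ σ p.2 < σ p.1}

lemma len_eq (σ : Equiv.Perm ℕ) : len σ = (Inv σ).ncard := Nat.card_coe_set_eq _

/-- `a` is a left descent of `σ`. -/
def LDes (a : ℕ) (σ : Equiv.Perm ℕ) : Prop := σ⁻¹ (a+1) < σ⁻¹ a

lemma swap_lt (a x y : ℕ) :
    s a x < s a y ↔ ((x < y ∧ ¬(x = a ∧ y = a+1)) ∨ (x = a+1 ∧ y = a)) := by
  simp only [s_apply]
  split_ifs <;> omega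

lemma smul_apply (b : ℕ) (σ : Equiv.Perm ℕ) (m : ℕ) : (s b * σ) m = s b (σ m) := rfl

lemma smul_inv_apply (b : ℕ) (σ : Equiv.Perm ℕ) (m : ℕ) : (s b * σ)⁻¹ m = σ⁻¹ (s b m) := by
  rw [mul_inv_rev, s_inv, Equiv.Perm.mul_apply]

lemma eq_inv_of_apply {σ : Equiv.Perm ℕ} {m k : ℕ} (h : σ m = k) : m = σ⁻¹ k := by
  subst h; exact (Equiv.symm_apply_apply σ m).symm

lemma apply_inv (σ : Equiv.Perm ℕ) (k : ℕ) : σ (σ⁻¹ k) = k := Equiv.apply_symm_apply σ k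

lemma inv_smul_des {a : ℕ} {σ : Equiv.Perm ℕ} (h : LDes a σ) :
    Inv (s a * σ) = Inv σ \ {(σ⁻¹ (a+1), σ⁻¹ a)} := by
  ext ⟨p, q⟩
  simp only [Inv, Set.mem_setOf_eq, Set.mem_diff, Set.mem_singleton_iff, Prod.mk.injEq,
    smul_apply]
  rw [swap_lt]
  constructor
  · rintro ⟨hpq, hlt | ⟨h1, h2⟩⟩
    · refine ⟨⟨hpq, hlt.1⟩, ?_⟩
      rintro ⟨rfl, rfl⟩
      exact hlt.2 ⟨apply_inv σ a, apply_inv σ (a+1)⟩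
    · exfalso
      rw [eq_inv_of_apply h1, eq_inv_of_apply h2] at hpq
      exact absurd hpq (not_lt.2 h.le)
  · rintro ⟨⟨hpq, hlt⟩, hne⟩
    refine ⟨hpq, Or.inl ⟨hlt, ?_⟩⟩
    rintro ⟨h1, h2⟩
    exact hne ⟨eq_inv_of_apply h2, eq_inv_of_apply h1⟩

lemma inv_smul_asc {a : ℕ} {σ : Equiv.Perm ℕ} (h : ¬ LDes a σ) :
    Inv (s a * σ) = insert (σ⁻¹ a, σ⁻¹ (a+1)) (Inv σ) := by
  have hlt : σ⁻¹ a < σ⁻¹ (a+1) := by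
    rcases lt_trichotomy (σ⁻¹ a) (σ⁻¹ (a+1)) with h1 | h1 | h1
    · exact h1
    · exact absurd (σ⁻¹.injective h1) (by omega)
    · exact absurd h1 h
  ext ⟨p, q⟩
  simp only [Inv, Set.mem_setOf_eq, Set.mem_insert_iff, Prod.mk.injEq, smul_apply]
  rw [swap_lt]
  constructor
  · rintro ⟨hpq, hlt' | ⟨h1, h2⟩⟩
    · exact Or.inr ⟨hpq, hlt'.1⟩
    · exact Or.inl ⟨eq_inv_of_apply h2, eq_inv_of_apply h1⟩
  · rintro (⟨rfl, rfl⟩ | ⟨hpq, h2⟩)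
    · exact ⟨hlt, Or.inr ⟨apply_inv σ (a+1), apply_inv σ a⟩⟩
    · refine ⟨hpq, Or.inl ⟨h2, ?_⟩⟩
      rintro ⟨h1', h2'⟩
      rw [eq_inv_of_apply h1', eq_inv_of_apply h2'] at hpq
      omega


lemma ldes_or (a : ℕ) (σ : Equiv.Perm ℕ) : LDes a σ ∨ σ⁻¹ a < σ⁻¹ (a+1) := by
  rcases lt_trichotomy (σ⁻¹ a) (σ⁻¹ (a+1)) with h1 | h1 | h1
  · exact Or.inr h1
  · exact absurd (σ⁻¹.injective h1) (by omega)
  · exact Or.inl h1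

lemma len_smul_des {a : ℕ} {σ : Equiv.Perm ℕ} (h : LDes a σ) (hfin : (Inv σ).Finite) :
    (Inv (s a * σ)).Finite ∧ len (s a * σ) + 1 = len σ := by
  have he : (σ⁻¹ (a+1), σ⁻¹ a) ∈ Inv σ := by
    refine ⟨h, ?_⟩
    simp only [apply_inv]; omega
  constructor
  · rw [inv_smul_des h]; exact hfin.diff
  · rw [len_eq, len_eq, inv_smul_des h]
    rw [Set.ncard_diff_singleton_add_one he hfin]

lemma len_smul_asc {a : ℕ} {σ : Equiv.Perm ℕ} (h : ¬ LDes a σ) (hfin : (Inv σ).Finite) :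
    (Inv (s a * σ)).Finite ∧ len (s a * σ) = len σ + 1 := by
  have he : (σ⁻¹ a, σ⁻¹ (a+1)) ∉ Inv σ := by
    rintro ⟨-, h2⟩
    simp only [apply_inv] at h2; omega
  refine ⟨by rw [inv_smul_asc h]; exact hfin.insert _, ?_⟩
  rw [len_eq, len_eq, inv_smul_asc h]
  exact Set.ncard_insert_of_notMem he hfin

lemma inv_one : Inv (1 : Equiv.Perm ℕ) = ∅ := by
  ext ⟨p, q⟩
  simp only [Inv, Set.mem_setOf_eq, Set.mem_empty_iff_false, iff_false, Equiv.Perm.one_apply]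
  omega

lemma len_one : len (1 : Equiv.Perm ℕ) = 0 := by
  rw [len_eq, inv_one, Set.ncard_empty]

lemma pi_finite_len (w : List ℕ) : (Inv (π w)).Finite ∧ len (π w) ≤ w.length := by
  induction w with
  | nil => simp [pi_nil, inv_one, len_one]
  | cons b u ih =>
    rw [pi_cons]
    rcases ldes_or b (π u) with hd | hd
    · obtain ⟨hf, hl⟩ := len_smul_des hd ih.1
      exact ⟨hf, by simp; omega⟩
    · have hnd : ¬ LDes b (π u) := by unfold LDes; omega
      obtain ⟨hf, hl⟩ := len_smul_asc hnd ih.1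
      exact ⟨hf, by simp; omega⟩


lemma reduced_inv_finite {σ : Equiv.Perm ℕ} {w : List ℕ} (h : Reduced σ w) :
    (Inv σ).Finite := by
  rw [← h.1]; exact (pi_finite_len w).1

lemma smul_smul_cancel (b : ℕ) (σ : Equiv.Perm ℕ) : s b * (s b * σ) = σ := by
  rw [← mul_assoc, s_mul_self, one_mul]

lemma strip {σ : Equiv.Perm ℕ} {b : ℕ} {u : List ℕ}
    (h : Reduced σ (b :: u)) : LDes b σ ∧ Reduced (s b * σ) u := by
  obtain ⟨hpi, hlen⟩ := h
  have hfinσ : (Inv σ).Finite := by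
    rw [← hpi]; exact (pi_finite_len (b :: u)).1
  have hτ : π u = s b * σ := by
    rw [← hpi, pi_cons, smul_smul_cancel]
  have hτfin : (Inv (s b * σ)).Finite := by rw [← hτ]; exact (pi_finite_len u).1
  have hτlen : len (s b * σ) ≤ u.length := by rw [← hτ]; exact (pi_finite_len u).2
  have hlen' : len σ = u.length + 1 := by simpa using hlen.symm
  have hdes : LDes b σ := by
    by_contra hnd
    obtain ⟨-, hl⟩ := len_smul_asc hnd hfinσ
    omega
  obtain ⟨-, hl⟩ := len_smul_des hdes hfinσ
  exact ⟨hdes, hτ, by omega⟩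



def J (w w' : List ℕ) : Prop := BraidMove w w' ∨ CommMove w w'
def M : List ℕ → List ℕ → Prop := Relation.EqvGen J

lemma M_refl (w : List ℕ) : M w w := Relation.EqvGen.refl w
lemma M_symm {w w' : List ℕ} (h : M w w') : M w' w := Relation.EqvGen.symm _ _ h
lemma M_trans {w w' w'' : List ℕ} (h : M w w') (h' : M w' w'') : M w w'' :=
  Relation.EqvGen.trans _ _ _ h h'
lemma M_of_J {w w' : List ℕ} (h : J w w') : M w w' := Relation.EqvGen.rel _ _ h

lemma braid_symm {w w' : List ℕ} (h : BraidMove w w') : BraidMove w' w := by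
  obtain ⟨u, v, a, h | h⟩ := h
  · exact ⟨u, v, a, Or.inr ⟨h.2, h.1⟩⟩
  · exact ⟨u, v, a, Or.inl ⟨h.2, h.1⟩⟩

lemma comm_symm {w w' : List ℕ} (h : CommMove w w') : CommMove w' w := by
  obtain ⟨u, v, a, b, hab, h1, h2⟩ := h
  exact ⟨u, v, b, a, by omega, h2, h1⟩

lemma J_symm {w w' : List ℕ} (h : J w w') : J w' w := by
  rcases h with h | h
  · exact Or.inl (braid_symm h)
  · exact Or.inr (comm_symm h)

lemma pi_three (x y z : ℕ) (v : List ℕ) : π (x :: y :: z :: v) = s x * s y * s z * π v := by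
  simp [pi_cons, mul_assoc]

lemma braid_pi {w w' : List ℕ} (h : BraidMove w w') : π w = π w' ∧ w.length = w'.length := by
  obtain ⟨u, v, a, ⟨h1, h2⟩ | ⟨h1, h2⟩⟩ := h <;> subst h1 <;> subst h2 <;>
    constructor <;> simp [pi_append, pi_three, ← mul_assoc, braid_rel a]

lemma comm_pi {w w' : List ℕ} (h : CommMove w w') : π w = π w' ∧ w.length = w'.length := by
  obtain ⟨u, v, a, b, hab, h1, h2⟩ := h
  subst h1; subst h2
  constructor
  · simp only [pi_append, pi_cons, ← mul_assoc, comm_rel hab]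
  · simp

lemma J_pi {w w' : List ℕ} (h : J w w') : π w = π w' ∧ w.length = w'.length := by
  rcases h with h | h
  · exact braid_pi h
  · exact comm_pi h

lemma J_reduced {σ : Equiv.Perm ℕ} {w w' : List ℕ} (h : J w w') (hr : Reduced σ w) :
    Reduced σ w' := by
  obtain ⟨h1, h2⟩ := J_pi h
  exact ⟨h1 ▸ hr.1, h2 ▸ hr.2⟩

lemma M_reduced_iff {σ : Equiv.Perm ℕ} {w w' : List ℕ} (h : M w w') :
    Reduced σ w ↔ Reduced σ w' := by
  induction h with
  | rel x y hj => exact ⟨fun hr => J_reduced hj hr, fun hr => J_reduced (J_symm hj) hr⟩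
  | refl => exact Iff.rfl
  | symm x y hxy ih => exact ih.symm
  | trans x y z hxy hyz ih1 ih2 => exact ih1.trans ih2

lemma M_reduced {σ : Equiv.Perm ℕ} {w w' : List ℕ} (h : M w w') (hr : Reduced σ w) :
    Reduced σ w' := (M_reduced_iff h).1 hr


lemma braid_cons {b : ℕ} {u u' : List ℕ} (h : BraidMove u u') : BraidMove (b :: u) (b :: u') := by
  obtain ⟨x, y, a, ⟨h1, h2⟩ | ⟨h1, h2⟩⟩ := h
  · exact ⟨b :: x, y, a, Or.inl ⟨by simp [h1], by simp [h2]⟩⟩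
  · exact ⟨b :: x, y, a, Or.inr ⟨by simp [h1], by simp [h2]⟩⟩

lemma comm_cons {b : ℕ} {u u' : List ℕ} (h : CommMove u u') : CommMove (b :: u) (b :: u') := by
  obtain ⟨x, y, a, c, hac, h1, h2⟩ := h
  exact ⟨b :: x, y, a, c, hac, by simp [h1], by simp [h2]⟩

lemma M_cons (b : ℕ) {u u' : List ℕ} (h : M u u') : M (b :: u) (b :: u') := by
  induction h with
  | rel x y hj =>
    refine M_of_J ?_
    rcases hj with hj | hj
    · exact Or.inl (braid_cons hj)
    · exact Or.inr (comm_cons hj)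
  | refl => exact M_refl _
  | symm x y hxy ih => exact M_symm ih
  | trans x y z hxy hyz ih1 ih2 => exact M_trans ih1 ih2

lemma s_val {x y z : ℕ} (h : (y = x ∧ z = x+1) ∨ (y = x+1 ∧ z = x) ∨ (y ≠ x ∧ y ≠ x+1 ∧ z = y)) :
    s x y = z := by
  rw [s_apply]; split_ifs <;> omega

lemma key : ∀ ℓ : ℕ, ∀ σ : Equiv.Perm ℕ, ∀ w : List ℕ, ∀ a : ℕ,
    Reduced σ w → w.length = ℓ → LDes a σ →
    ∃ v, Reduced σ (a :: v) ∧ M w (a :: v) := by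
  intro ℓ
  induction ℓ using Nat.strong_induction_on with
  | _ ℓ IH =>
  intro σ w a hred hlen hdes
  cases w with
  | nil =>
    exfalso
    have h1 : σ = 1 := hred.1.symm
    rw [h1] at hdes
    unfold LDes at hdes
    simp at hdes
  | cons b u =>
    obtain ⟨hbdes, hured⟩ := strip hred
    by_cases hab : a = b
    · subst hab; exact ⟨u, hred, M_refl _⟩
    have hlenu : u.length + 1 = ℓ := by simpa using hlen
    have hlenσ : len σ = ℓ := by
      have := hred.2; simp at this; omega
    have hlenτ : len (s b * σ) = ℓ - 1 := by
      have := hured.2; omega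
    by_cases hfar : b + 1 < a ∨ a + 1 < b
    · -- commutation case
      have hdesτ : LDes a (s b * σ) := by
        unfold LDes at hdes ⊢
        rw [smul_inv_apply, smul_inv_apply,
          s_val (x := b) (y := a) (z := a) (by omega),
          s_val (x := b) (y := a+1) (z := a+1) (by omega)]
        exact hdes
      obtain ⟨v, hvred, hvM⟩ := IH (ℓ-1) (by omega) (s b * σ) u a hured (by omega) hdesτ
      have hcm : 1 < ((a : ℤ) - (b : ℤ)).natAbs := by omega
      refine ⟨b :: v, ⟨?_, ?_⟩, ?_⟩
      · have : π (a :: b :: v) = s a * s b * π v := by simp [pi_cons, mul_assoc]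
        rw [this, comm_rel hcm, mul_assoc, ← pi_cons, hvred.1, smul_smul_cancel]
      · have h2 := hvred.2
        simp at h2 ⊢
        omega
      · refine M_trans (M_cons b hvM) (M_of_J (Or.inr ?_))
        exact ⟨[], v, b, a, by omega, rfl, rfl⟩
    · -- adjacent case
      have hadj : a = b + 1 ∨ b = a + 1 := by omega
      have hdesτ : LDes a (s b * σ) := by
        unfold LDes at hdes hbdes ⊢
        rcases hadj with h' | h' <;> subst h' <;>
          rw [smul_inv_apply, smul_inv_apply]
        · rw [s_val (x := b) (y := b+1) (z := b) (by omega),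
            s_val (x := b) (y := b+2) (z := b+2) (by omega)]
          have hnn : σ⁻¹ (b+1+1) = σ⁻¹ (b+2) := by norm_num
          omega
        · rw [s_val (x := a+1) (y := a) (z := a) (by omega),
            s_val (x := a+1) (y := a+1) (z := a+2) (by omega)]
          have hnn : σ⁻¹ (a+1+1) = σ⁻¹ (a+2) := by norm_num
          omega
      obtain ⟨v, hvred, hvM⟩ := IH (ℓ-1) (by omega) (s b * σ) u a hured (by omega) hdesτ
      obtain ⟨hadesτ, hvred'⟩ := strip hvred
      have hdesρ : LDes b (s a * (s b * σ)) := by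
        unfold LDes at hdes hbdes ⊢
        rcases hadj with h' | h' <;> subst h' <;>
          rw [smul_inv_apply, smul_inv_apply, smul_inv_apply, smul_inv_apply]
        · rw [s_val (x := b+1) (y := b) (z := b) (by omega),
            s_val (x := b) (y := b) (z := b+1) (by omega),
            s_val (x := b+1) (y := b+1) (z := b+2) (by omega),
            s_val (x := b) (y := b+2) (z := b+2) (by omega)]
          have hnn : σ⁻¹ (b+1+1) = σ⁻¹ (b+2) := by norm_num
          omega
        · rw [s_val (x := a) (y := a+1) (z := a) (by omega),
            s_val (x := a+1) (y := a) (z := a) (by omega),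
            s_val (x := a) (y := a+2) (z := a+2) (by omega),
            s_val (x := a+1) (y := a+2) (z := a+1) (by omega)]
          have hnn : σ⁻¹ (a+1+1) = σ⁻¹ (a+2) := by norm_num
          omega
      have hlenv : v.length = ℓ - 2 := by
        have := hvred.2; simp at this; omega
      have hl2 : 2 ≤ ℓ := by
        have := hvred.2; simp at this; omega
      obtain ⟨x, hxred, hxM⟩ := IH (ℓ-2) (by omega) (s a * (s b * σ)) v b hvred' hlenv hdesρ
      -- the word b :: a :: b :: x is reduced for σ
      have hyred : Reduced σ (b :: a :: b :: x) := by
        constructor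
        · rw [pi_three, mul_assoc, ← pi_cons, hxred.1]
          rw [show s b * s a * (s a * (s b * σ)) = σ by
            rw [mul_assoc, smul_smul_cancel, smul_smul_cancel]]
        · have h2 := hxred.2
          have h3 := hvred'.2
          simp at h2 h3 ⊢
          omega
      have hbr : J (b :: a :: b :: x) (a :: b :: a :: x) := by
        rcases hadj with h' | h' <;> subst h'
        · exact Or.inl ⟨[], x, b, Or.inl ⟨rfl, rfl⟩⟩
        · exact Or.inl ⟨[], x, a, Or.inr ⟨rfl, rfl⟩⟩
      refine ⟨b :: a :: x, J_reduced hbr hyred, ?_⟩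
      have h1 : M (b :: u) (b :: a :: v) := M_cons b hvM
      have h2 : M (b :: a :: v) (b :: a :: b :: x) := M_cons b (M_cons a hxM)
      exact M_trans (M_trans h1 h2) (M_of_J hbr)

lemma matsumoto : ∀ ℓ : ℕ, ∀ σ : Equiv.Perm ℕ, ∀ w w' : List ℕ,
    Reduced σ w → Reduced σ w' → w.length = ℓ → M w w' := by
  intro ℓ
  induction ℓ using Nat.strong_induction_on with
  | _ ℓ IH =>
  intro σ w w' hw hw' hlen
  cases w' with
  | nil =>
    have h0 : len σ = 0 := by simpa using hw'.2.symm
    have : w.length = 0 := by rw [hw.2, h0]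
    rw [List.length_eq_zero_iff] at this
    subst this
    exact M_refl _
  | cons a u' =>
    obtain ⟨hades, hu'red⟩ := strip hw'
    obtain ⟨v, hvred, hvM⟩ := key ℓ σ w a hw hlen hades
    have hvred' : Reduced (s a * σ) v := (strip hvred).2
    have hℓpos : 1 ≤ ℓ := by
      have := hw'.2
      have h2 := hw.2
      simp at this
      omega
    have hMv : M v u' := by
      refine IH (ℓ-1) (by omega) (s a * σ) v u' hvred' hu'red ?_
      have h1 := hvred.2
      have h2 := hw.2
      simp at h1
      omega
    exact M_trans hvM (M_cons a hMv)



lemma lists_finite (S : Set ℕ) (hS : S.Finite) :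
    ∀ L : ℕ, {l : List ℕ | l.length = L ∧ ∀ x ∈ l, x ∈ S}.Finite := by
  intro L
  induction L with
  | zero =>
    refine Set.Finite.subset (Set.finite_singleton []) ?_
    rintro l ⟨hl, -⟩
    rw [List.length_eq_zero_iff] at hl
    simp [hl]
  | succ L ih =>
    refine Set.Finite.subset ((hS.prod ih).image (fun p => p.1 :: p.2)) ?_
    rintro l ⟨hl, hmem⟩
    cases l with
    | nil => simp at hl
    | cons x t =>
      refine ⟨(x, t), ⟨hmem x (by simp), ⟨by simpa using hl, fun y hy => hmem y (by simp [hy])⟩⟩, rfl⟩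

lemma Sn_inv {n : ℕ} {σ : Equiv.Perm ℕ} (hσ : σ ∈ Sn n) : σ⁻¹ ∈ Sn n := by
  intro m hm
  exact (eq_inv_of_apply (hσ m hm)).symm

lemma Sn_inv_bounds {n : ℕ} {σ : Equiv.Perm ℕ} (hσ : σ ∈ Sn n) {m : ℕ}
    (h1 : 1 ≤ m) (h2 : m ≤ n) : 1 ≤ σ⁻¹ m ∧ σ⁻¹ m ≤ n := by
  by_contra hcon
  have hbad : σ⁻¹ m = 0 ∨ n < σ⁻¹ m := by omega
  have := hσ _ hbad
  rw [apply_inv] at this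
  omega

lemma ldes_bounds {n : ℕ} {σ : Equiv.Perm ℕ} (hσ : σ ∈ Sn n) {b : ℕ}
    (h : LDes b σ) : 1 ≤ b ∧ b < n := by
  unfold LDes at h
  have hinv := Sn_inv hσ
  have hb1 : 1 ≤ b := by
    by_contra hb
    have hb0 : b = 0 := by omega
    subst hb0
    have h0 : σ⁻¹ 0 = 0 := hinv 0 (Or.inl rfl)
    omega
  refine ⟨hb1, ?_⟩
  by_contra hb
  push_neg at hb
  rcases Nat.lt_or_ge n b with hlt | hge
  · have h1 : σ⁻¹ b = b := hinv b (Or.inr hlt)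
    have h2 : σ⁻¹ (b+1) = b+1 := hinv (b+1) (Or.inr (by omega))
    omega
  · have h2 : σ⁻¹ (b+1) = b+1 := hinv (b+1) (Or.inr (by omega))
    have h3 := Sn_inv_bounds hσ hb1 (by omega : b ≤ n)
    omega

lemma smul_mem_Sn {n : ℕ} {σ : Equiv.Perm ℕ} (hσ : σ ∈ Sn n) {b : ℕ}
    (h1 : 1 ≤ b) (h2 : b < n) : s b * σ ∈ Sn n := by
  intro m hm
  rw [smul_apply, hσ m hm]
  apply s_val
  rcases hm with rfl | hm
  · right; right; omega
  · right; right; omega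

lemma reduced_letters {n : ℕ} : ∀ (w : List ℕ) (σ : Equiv.Perm ℕ), σ ∈ Sn n →
    Reduced σ w → ∀ x ∈ w, 1 ≤ x ∧ x < n := by
  intro w
  induction w with
  | nil => intro σ _ _ x hx; simp at hx
  | cons b u ih =>
    intro σ hσ hred x hx
    obtain ⟨hdes, hured⟩ := strip hred
    have hb := ldes_bounds hσ hdes
    rcases List.mem_cons.mp hx with rfl | hx
    · exact hb
    · exact ih (s b * σ) (smul_mem_Sn hσ hb.1 hb.2) hured x hx


lemma R_finite {n : ℕ} {σ : Equiv.Perm ℕ} (hσ : σ ∈ Sn n) : (R σ).Finite := by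
  refine Set.Finite.subset (lists_finite {x | x < n} (Set.finite_Iio n) (len σ)) ?_
  intro w hw
  exact ⟨hw.2, fun x hx => (reduced_letters w σ hσ hw x hx).2⟩

lemma braid_mem {w w' : List ℕ} (h : BraidMove w w') :
    w'.length = w.length ∧ ∀ x ∈ w', x ∈ w := by
  obtain ⟨u, v, a, ⟨h1, h2⟩ | ⟨h1, h2⟩⟩ := h <;> subst h1 <;> subst h2 <;>
    refine ⟨by simp, ?_⟩ <;> intro x hx <;>
    simp only [List.mem_append, List.mem_cons] at hx ⊢ <;> tauto

lemma braid_nbrs_finite (w : List ℕ) : {w' | BraidMove w w'}.Finite := by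
  refine Set.Finite.subset (lists_finite {x | x ∈ w} (List.finite_toSet w) w.length) ?_
  intro w' hw'
  obtain ⟨h1, h2⟩ := braid_mem hw'
  exact ⟨h1, h2⟩

lemma braid_irrefl (w : List ℕ) : ¬ BraidMove w w := by
  rintro ⟨u, v, a, ⟨h1, h2⟩ | ⟨h1, h2⟩⟩ <;>
  · rw [h1] at h2
    have := List.append_cancel_left h2
    simp at this

section QuotLemmas

variable {α : Type*}

open Relation

lemma eqvgen_decomp {s t : α → α → Prop} {x y : α}
    (ht : ∀ a b, t a b → s a b ∨ (a = x ∧ b = y) ∨ (a = y ∧ b = x)) :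
    ∀ a b, EqvGen t a b →
      EqvGen s a b ∨
      (EqvGen s a x ∧ EqvGen s y b) ∨
      (EqvGen s a y ∧ EqvGen s x b) := by
  intro a b h
  induction h with
  | rel a b hab =>
    rcases ht a b hab with h | ⟨rfl, rfl⟩ | ⟨rfl, rfl⟩
    · exact Or.inl (EqvGen.rel _ _ h)
    · exact Or.inr (Or.inl ⟨EqvGen.refl _, EqvGen.refl _⟩)
    · exact Or.inr (Or.inr ⟨EqvGen.refl _, EqvGen.refl _⟩)
  | refl a => exact Or.inl (EqvGen.refl a)
  | symm a b hab ih =>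
    rcases ih with h | ⟨h1, h2⟩ | ⟨h1, h2⟩
    · exact Or.inl (EqvGen.symm _ _ h)
    · exact Or.inr (Or.inr ⟨EqvGen.symm _ _ h2, EqvGen.symm _ _ h1⟩)
    · exact Or.inr (Or.inl ⟨EqvGen.symm _ _ h2, EqvGen.symm _ _ h1⟩)
  | trans a b c hab hbc ih1 ih2 =>
    rcases ih1 with h1 | ⟨h1, h1'⟩ | ⟨h1, h1'⟩ <;>
      rcases ih2 with h2 | ⟨h2, h2'⟩ | ⟨h2, h2'⟩
    · exact Or.inl (EqvGen.trans _ _ _ h1 h2)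
    · exact Or.inr (Or.inl ⟨EqvGen.trans _ _ _ h1 h2, h2'⟩)
    · exact Or.inr (Or.inr ⟨EqvGen.trans _ _ _ h1 h2, h2'⟩)
    · exact Or.inr (Or.inl ⟨h1, EqvGen.trans _ _ _ h1' h2⟩)
    · -- a~x, y~b ; b~x, y~c : x~y via y~b~x, then a~c
      have hxy : EqvGen s x y :=
        EqvGen.symm _ _ (EqvGen.trans _ _ _ h1' h2)
      exact Or.inl (EqvGen.trans _ _ _ h1 (EqvGen.trans _ _ _ hxy h2'))
    · exact Or.inl (EqvGen.trans _ _ _ h1 h2')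
    · exact Or.inr (Or.inr ⟨h1, EqvGen.trans _ _ _ h1' h2⟩)
    · exact Or.inl (EqvGen.trans _ _ _ h1 h2')
    · -- a~y, x~b ; b~y, x~c : x~y via x~b~y
      have hxy : EqvGen s x y := EqvGen.trans _ _ _ h1' h2
      exact Or.inl (EqvGen.trans _ _ _ h1 (EqvGen.trans _ _ _ (EqvGen.symm _ _ hxy) h2'))

lemma card_quot_le_insert [Finite α] (s : α → α → Prop) (x y : α) :
    Nat.card (Quot s) ≤
      Nat.card (Quot (fun a b => s a b ∨ (a = x ∧ b = y) ∨ (a = y ∧ b = x))) + 1 := by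
  classical
  set t : α → α → Prop := fun a b => s a b ∨ (a = x ∧ b = y) ∨ (a = y ∧ b = x) with ht
  haveI : Finite (Quot t) := Quot.finite _
  set g : Quot s → Quot t := Quot.map id (fun a b h => Or.inl h) with hg
  have hgmk : ∀ a : α, g (Quot.mk s a) = Quot.mk t a := fun a => rfl
  set f : Quot s → Quot t ⊕ Unit := fun c =>
    if c = Quot.mk s y ∧ Quot.mk s x ≠ Quot.mk s y then Sum.inr () else Sum.inl (g c) with hf
  have hdec : ∀ a b, t a b → s a b ∨ (a = x ∧ b = y) ∨ (a = y ∧ b = x) := fun a b h => h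
  have hinj : Function.Injective f := by
    intro c c' hcc'
    obtain ⟨a, rfl⟩ := Quot.exists_rep c
    obtain ⟨b, rfl⟩ := Quot.exists_rep c'
    simp only [hf] at hcc'
    by_cases h1 : Quot.mk s a = Quot.mk s y ∧ Quot.mk s x ≠ Quot.mk s y <;>
      by_cases h2 : Quot.mk s b = Quot.mk s y ∧ Quot.mk s x ≠ Quot.mk s y
    · exact h1.1.trans h2.1.symm
    · rw [if_pos h1, if_neg h2] at hcc'
      exact absurd hcc' (by simp)
    · rw [if_neg h1, if_pos h2] at hcc'
      exact absurd hcc' (by simp)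
    · rw [if_neg h1, if_neg h2] at hcc'
      simp only [Sum.inl.injEq, hgmk] at hcc'
      have het : EqvGen t a b := Quot.eqvGen_exact hcc'
      rcases eqvgen_decomp hdec a b het with h | ⟨ha, hb⟩ | ⟨ha, hb⟩
      · exact Quot.eqvGen_sound h
      · have hby : Quot.mk s b = Quot.mk s y :=
          Quot.eqvGen_sound (EqvGen.symm _ _ hb)
        have hxy : Quot.mk s x = Quot.mk s y := by
          by_contra hxy
          exact h2 ⟨hby, hxy⟩
        have hxys : EqvGen s x y := Quot.eqvGen_exact hxy
        exact Quot.eqvGen_sound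
          (EqvGen.trans _ _ _ ha (EqvGen.trans _ _ _ hxys hb))
      · have hay : Quot.mk s a = Quot.mk s y := Quot.eqvGen_sound ha
        have hxy : Quot.mk s x = Quot.mk s y := by
          by_contra hxy
          exact h1 ⟨hay, hxy⟩
        have hxys : EqvGen s x y := Quot.eqvGen_exact hxy
        exact Quot.eqvGen_sound
          (EqvGen.trans _ _ _ ha (EqvGen.trans _ _ _ (EqvGen.symm _ _ hxys) hb))
  calc Nat.card (Quot s) ≤ Nat.card (Quot t ⊕ Unit) :=
        Nat.card_le_card_of_injective f hinj
    _ = Nat.card (Quot t) + 1 := by rw [Nat.card_sum]; simp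

lemma quot_bound [Finite α] :
    ∀ (k : ℕ) (c r : α → α → Prop), (∀ a b, r a b → r b a) → (∀ a, ¬ r a a) →
    {p : α × α | r p.1 p.2}.ncard ≤ k →
    Nat.card (Quot c) ≤ Nat.card (Quot (fun a b => c a b ∨ r a b))
      + {p : α × α | r p.1 p.2}.ncard / 2 := by
  intro k
  induction k with
  | zero =>
    intro c r hsym hirr hcard
    have hre : ∀ a b, ¬ r a b := by
      intro a b hab
      have h1 : (a, b) ∈ {p : α × α | r p.1 p.2} := hab
      have h2 : 0 < ({p : α × α | r p.1 p.2}).ncard :=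
        (Set.ncard_pos (Set.toFinite _)).2 ⟨_, h1⟩
      omega
    have he : Quot c ≃ Quot (fun a b => c a b ∨ r a b) :=
      Quot.congrRight (fun a b => by simp [hre a b])
    rw [Nat.card_congr he]
    omega
  | succ k IH =>
    intro c r hsym hirr hcard
    by_cases hk : {p : α × α | r p.1 p.2}.ncard ≤ k
    · exact IH c r hsym hirr hk
    by_cases hre : ∀ a b, ¬ r a b
    · have he : Quot c ≃ Quot (fun a b => c a b ∨ r a b) :=
        Quot.congrRight (fun a b => by simp [hre a b])
      rw [Nat.card_congr he]
      omega
    push_neg at hre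
    obtain ⟨x, y, hxy⟩ := hre
    have hxney : x ≠ y := fun h => hirr x (h ▸ hxy)
    set r' : α → α → Prop := fun a b => r a b ∧ ¬((a = x ∧ b = y) ∨ (a = y ∧ b = x)) with hr'
    set E := {p : α × α | r p.1 p.2} with hE
    set E' := {p : α × α | r' p.1 p.2} with hE'
    have hEeq : E = insert (x, y) (insert (y, x) E') := by
      ext ⟨a, b⟩
      simp only [hE, hE', hr', Set.mem_insert_iff, Set.mem_setOf_eq, Prod.mk.injEq]
      constructor
      · intro hab
        by_cases h1 : (a = x ∧ b = y) ∨ (a = y ∧ b = x)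
        · rcases h1 with ⟨rfl, rfl⟩ | ⟨rfl, rfl⟩
          · exact Or.inl ⟨rfl, rfl⟩
          · exact Or.inr (Or.inl ⟨rfl, rfl⟩)
        · exact Or.inr (Or.inr ⟨hab, h1⟩)
      · rintro (⟨rfl, rfl⟩ | ⟨rfl, rfl⟩ | ⟨h, -⟩)
        · exact hxy
        · exact hsym _ _ hxy
        · exact h
    have hyx_notmem : (y, x) ∉ E' := by
      simp [hE', hr']
    have hxy_notmem : (x, y) ∉ insert (y, x) E' := by
      intro hmem
      rcases hmem with h | h
      · rw [Prod.mk.injEq] at h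
        exact hxney h.1
      · exact h.2 (Or.inl ⟨rfl, rfl⟩)
    have hcardE : E.ncard = E'.ncard + 2 := by
      rw [hEeq, Set.ncard_insert_of_notMem hxy_notmem (Set.toFinite _),
        Set.ncard_insert_of_notMem hyx_notmem (Set.toFinite _)]
    have hsym' : ∀ a b, r' a b → r' b a := by
      intro a b ⟨h1, h2⟩
      exact ⟨hsym a b h1, by tauto⟩
    have hirr' : ∀ a, ¬ r' a a := fun a h => hirr a h.1
    have hIH := IH c r' hsym' hirr' (by rw [← hE']; omega)
    rw [← hE'] at hIH
    have hmerge := card_quot_le_insert (fun a b => c a b ∨ r' a b) x y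
    have hcong : Quot (fun a b => (c a b ∨ r' a b) ∨ (a = x ∧ b = y) ∨ (a = y ∧ b = x))
        ≃ Quot (fun a b => c a b ∨ r a b) := by
      refine Quot.congrRight (fun a b => ?_)
      constructor
      · rintro ((h | h) | ⟨rfl, rfl⟩ | ⟨rfl, rfl⟩)
        · exact Or.inl h
        · exact Or.inr h.1
        · exact Or.inr hxy
        · exact Or.inr (hsym _ _ hxy)
      · rintro (h | h)
        · exact Or.inl (Or.inl h)
        · by_cases h1 : (a = x ∧ b = y) ∨ (a = y ∧ b = x)
          · exact Or.inr h1
          · exact Or.inl (Or.inr ⟨h, h1⟩)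
    rw [Nat.card_congr hcong] at hmerge
    omega

end QuotLemmas


lemma M_quot {σ : Equiv.Perm ℕ} : ∀ {x y : List ℕ}, M x y →
    ∀ (hx : Reduced σ x) (hy : Reduced σ y),
    Quot.mk (fun a b : R σ => CommMove a.1 b.1 ∨ BraidMove a.1 b.1) ⟨x, hx⟩ =
      Quot.mk (fun a b : R σ => CommMove a.1 b.1 ∨ BraidMove a.1 b.1) ⟨y, hy⟩ := by
  intro x y h
  induction h with
  | rel a b hj =>
    intro ha hb
    refine Quot.sound ?_
    rcases hj with hj | hj
    · exact Or.inr hj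
    · exact Or.inl hj
  | refl a => intro ha hb; rfl
  | symm a b hab ih => intro ha hb; exact (ih hb ha).symm
  | trans a b c hab hbc ih1 ih2 =>
    intro ha hc
    have hbred : Reduced σ b := M_reduced hab ha
    exact (ih1 ha hbred).trans (ih2 hbred hc)

lemma eqvgen_bot {β : Type*} {a b : β} (h : Relation.EqvGen (fun _ _ => False) a b) : a = b := by
  induction h with
  | rel _ _ h => exact absurd h not_false
  | refl => rfl
  | symm _ _ _ ih => exact ih.symm
  | trans _ _ _ _ _ ih1 ih2 => exact ih1.trans ih2


/-- if `σ ∈ S_n` satisfies `Σ_{w ∈ R σ} d_B(w) ≤ |R σ|`, then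
`|B(σ)| ≥ (1/2)|R σ| − 1` and `|C(σ)| ≤ (1/2)|R σ| + 2`. -/
theorem statement_18 (n : ℕ) (σ : Equiv.Perm ℕ) (hσ : σ ∈ Sn n)
    (h : ∑ᶠ w ∈ R σ, dB w ≤ Nat.card (R σ)) :
    (nB σ : ℝ) ≥ (1 / 2) * (Nat.card (R σ) : ℝ) - 1 ∧
    (nC σ : ℝ) ≤ (1 / 2) * (Nat.card (R σ) : ℝ) + 2 := by
  classical
  have hRfin : (R σ).Finite := R_finite hσ
  haveI : Finite ↥(R σ) := hRfin.to_subtype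
  haveI : Fintype ↥(R σ) := hRfin.fintype
  set rB : ↥(R σ) → ↥(R σ) → Prop := fun w w' => BraidMove w.1 w'.1 with hrB
  set rC : ↥(R σ) → ↥(R σ) → Prop := fun w w' => CommMove w.1 w'.1 with hrC
  set V : ℕ := Nat.card (R σ) with hV
  -- the degree identity
  have hdeg : ∀ w : ↥(R σ), dB w.1 =
      (Finset.univ.filter (fun w' : ↥(R σ) => rB w w')).card := by
    intro w
    have he : {w' : List ℕ // BraidMove w.1 w'} ≃ {w' : ↥(R σ) // rB w w'} :=
      { toFun := fun p => ⟨⟨p.1, M_reduced (M_of_J (Or.inl p.2)) w.2⟩, p.2⟩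
        invFun := fun p => ⟨p.1.1, p.2⟩
        left_inv := fun p => rfl
        right_inv := fun p => rfl }
    rw [dB, Nat.card_congr he, Nat.card_eq_fintype_card, Fintype.card_subtype]
  -- handshake: total degree = number of ordered edges
  set P : Finset (↥(R σ) × ↥(R σ)) := Finset.univ.filter (fun p => rB p.1 p.2) with hP
  have hhand : ∑ w : ↥(R σ), dB w.1 = P.card := by
    rw [Finset.card_eq_sum_card_fiberwise
      (f := Prod.fst) (t := Finset.univ) (fun x _ => Finset.mem_univ _)]
    refine Finset.sum_congr rfl (fun w _ => ?_)
    rw [hdeg w]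
    refine Finset.card_bij' (fun w' _ => (w, w')) (fun p _ => p.2) ?_ ?_ ?_ ?_
    · intro w' hw'
      simp only [Finset.mem_filter, Finset.mem_univ, true_and] at hw'
      simp only [hP, Finset.mem_filter, Finset.mem_univ, true_and]
      exact ⟨hw', trivial⟩
    · rintro ⟨p1, p2⟩ hp
      simp only [hP, Finset.mem_filter, Finset.mem_univ, true_and] at hp ⊢
      obtain ⟨h1, h2⟩ := hp
      rw [← h2]
      exact h1
    · intro w' _
      rfl
    · rintro ⟨p1, p2⟩ hp
      simp only [hP, Finset.mem_filter, Finset.mem_univ, true_and] at hp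
      obtain ⟨h1, rfl⟩ := hp
      rfl
  -- the finsum equals the sum over the subtype
  have hfin : ∑ᶠ w ∈ R σ, dB w = ∑ w : ↥(R σ), dB w.1 := by
    rw [finsum_mem_eq_finite_toFinset_sum dB hRfin]
    exact Finset.sum_subtype hRfin.toFinset (fun x => hRfin.mem_toFinset) dB
  -- the edge set
  set ES : Set (↥(R σ) × ↥(R σ)) := {p | rB p.1 p.2} with hES
  have hEScard : ES.ncard = P.card := by
    have : ES = ↑P := by
      ext p
      simp [hES, hP]
    rw [this, Set.ncard_coe_finset]
  have hEV : ES.ncard ≤ V := by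
    rw [hEScard, ← hhand, ← hfin]
    exact h
  -- symmetry and irreflexivity of rB
  have hsym : ∀ a b : ↥(R σ), rB a b → rB b a := fun a b hab => braid_symm hab
  have hirr : ∀ a : ↥(R σ), ¬ rB a a := fun a => braid_irrefl a.1
  -- connectivity: the full quotient has at most one class
  have hconn : Nat.card (Quot (fun a b : ↥(R σ) => rC a b ∨ rB a b)) ≤ 1 := by
    haveI hss : Subsingleton (Quot (fun a b : ↥(R σ) => rC a b ∨ rB a b)) := by
      constructor
      intro q q'
      obtain ⟨a, rfl⟩ := Quot.exists_rep q
      obtain ⟨b, rfl⟩ := Quot.exists_rep q'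
      have hM : M a.1 b.1 := matsumoto a.1.length σ a.1 b.1 a.2 b.2 rfl
      exact M_quot hM a.2 b.2
    rcases isEmpty_or_nonempty (Quot (fun a b : ↥(R σ) => rC a b ∨ rB a b)) with he | hne
    · rw [Nat.card_of_isEmpty]; omega
    · haveI : Unique (Quot (fun a b : ↥(R σ) => rC a b ∨ rB a b)) :=
        uniqueOfSubsingleton (Classical.arbitrary _)
      rw [Nat.card_unique]
  -- bound for nC
  have hC : nC σ ≤ 1 + ES.ncard / 2 := by
    have hq := quot_bound ES.ncard rC rB hsym hirr (le_of_eq rfl)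
    rw [← hES] at hq
    have e1 : nC σ = Nat.card (Quot rC) := rfl
    omega
  -- bound for nB
  have hB : V ≤ nB σ + ES.ncard / 2 := by
    have hq := quot_bound (α := ↥(R σ)) ES.ncard (fun _ _ => False) rB hsym hirr
      (le_of_eq rfl)
    have h1 : Nat.card (Quot (fun _ _ : ↥(R σ) => False)) = V := by
      rw [hV]
      refine Nat.card_congr (Equiv.ofBijective (fun a => Quot.mk _ a) ⟨?_, ?_⟩).symm
      · intro a b hab
        exact eqvgen_bot (Quot.eqvGen_exact hab)
      · intro q
        exact Quot.exists_rep q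
    have h2 : Quot (fun a b : ↥(R σ) => False ∨ rB a b) ≃ Quot rB :=
      Quot.congrRight (fun a b => by simp)
    rw [← hES, h1, Nat.card_congr h2] at hq
    have e2 : nB σ = Nat.card (Quot rB) := rfl
    omega
  -- conclude
  have hfact : V ≤ 2 * (V / 2) + 1 := by omega
  have hnB : V ≤ 2 * nB σ + 2 := by omega
  have hnC : 2 * nC σ ≤ V + 4 := by omega
  constructor
  · have := (Nat.cast_le (α := ℝ)).2 hnB
    push_cast at this
    linarith
  · have := (Nat.cast_le (α := ℝ)).2 hnC
    push_cast at this
    linarith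


end RW
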